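/- Let G and H be simple partially ordered abelian groups with order units u and v. Then (G ⊗ H, (G ⊗ H)₊, u ⊗ v), where (G⊗H)₊ = {a ∈ G⊗H : (s₁⊗s₂)(a) > 0 for all states s₁ ∈ S_u(G), s₂ ∈ S_v(H)} ∪ {0}, is a partially ordered abelian group with order unit u ⊗ v; that is: G⊗H = (G⊗H)₊ − (G⊗H)₊, (G⊗H)₊ ∩ (−(G⊗H)₊) = {0}, and for every a ∈ G⊗H there is a natural number m with m(u⊗v) − a ∈ (G⊗H)₊. -/

import Mathlib

namespace StmtFive

variable {G : Type*} [AddCommGroup G]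

/-- Bundled hypotheses on the positive cone. -/
structure GoodCone (P : Set G) (u : G) : Prop where
  zero_mem : (0 : G) ∈ P
  add_mem : ∀ x ∈ P, ∀ y ∈ P, x + y ∈ P
  pointed : ∀ x ∈ P, -x ∈ P → x = 0
  unit_mem : u ∈ P
  arch : ∀ g : G, ∃ n : ℕ, n • u - g ∈ P
  unit_ne : u ≠ 0

variable {P : Set G} {u : G}

theorem GoodCone.nsmul_mem (h : GoodCone P u) (n : ℕ) {x : G} (hx : x ∈ P) : n • x ∈ P := by
  induction n with
  | zero => simpa using h.zero_mem
  | succ k ih => rw [succ_nsmul]; exact h.add_mem _ ih _ hx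

theorem GoodCone.zsmul_mem (h : GoodCone P u) {c : ℤ} (hc : 0 ≤ c) {x : G} (hx : x ∈ P) :
    c • x ∈ P := by
  lift c to ℕ using hc
  rw [natCast_zsmul]
  exact h.nsmul_mem c hx

theorem GoodCone.unit_nonneg (h : GoodCone P u) {c : ℤ} (hc : c • u ∈ P) : 0 ≤ c := by
  by_contra hneg
  push_neg at hneg
  have h1 : (-c) • u ∈ P := h.zsmul_mem (by omega) h.unit_mem
  have h2 : c • u = 0 := h.pointed _ hc (by rwa [neg_smul] at h1)
  have h3 : -u ∈ P := by
    have h4 : (-c - 1) • u ∈ P := h.zsmul_mem (by omega) h.unit_mem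
    have h5 : (-c - 1) • u = -u := by
      rw [sub_smul, neg_smul, h2, one_smul, neg_zero, zero_sub]
    rwa [h5] at h4
  exact h.unit_ne (h.pointed u h.unit_mem h3)

theorem GoodCone.arch' (h : GoodCone P u) (g : G) : ∃ n : ℕ, (n : ℤ) • u - g ∈ P := by
  obtain ⟨n, hn⟩ := h.arch g
  exact ⟨n, by rwa [natCast_zsmul]⟩

/-- The set of rational-type upper bounds used to define the sublinear functional. -/
def okSet (P : Set G) (u : G) (x : G) : Set ℝ :=
  {q | ∃ m : ℤ, ∃ n : ℕ, 0 < n ∧ q = (m : ℝ) / (n : ℝ) ∧ m • u - (n : ℤ) • x ∈ P}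

/-- The sublinear functional `p(x) = inf { m/n : n x ≤ m u }`. -/
noncomputable def pfn (P : Set G) (u : G) (x : G) : ℝ :=
  sInf (okSet P u x)

theorem GoodCone.okSet_nonempty (h : GoodCone P u) (x : G) : (okSet P u x).Nonempty := by
  obtain ⟨n, hn⟩ := h.arch' x
  exact ⟨(n : ℝ), n, 1, one_pos, by norm_num, by simpa using hn⟩

theorem GoodCone.okSet_lb (h : GoodCone P u) (x : G) :
    ∃ k : ℕ, ∀ q ∈ okSet P u x, -(k : ℝ) ≤ q := by
  obtain ⟨k, hk⟩ := h.arch' (-x)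
  rw [sub_neg_eq_add] at hk
  refine ⟨k, ?_⟩
  rintro q ⟨m, n, hn, rfl, hmem⟩
  have h1 : (n : ℤ) • ((k : ℤ) • u + x) ∈ P := h.zsmul_mem (by positivity) hk
  have h2 : (m + n * k) • u ∈ P := by
    have := h.add_mem _ hmem _ h1
    rw [smul_add, smul_smul] at this
    convert this using 1
    rw [add_smul, mul_smul]
    abel
  have h3 : (0 : ℤ) ≤ m + n * k := h.unit_nonneg h2
  rw [le_div_iff₀ (by exact_mod_cast hn)]
  have : (-(k : ℝ)) * n = ((-(n * k) : ℤ) : ℝ) := by push_cast; ring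
  rw [this]
  exact_mod_cast (by omega : (-(n * k) : ℤ) ≤ m)

theorem GoodCone.okSet_bddBelow (h : GoodCone P u) (x : G) : BddBelow (okSet P u x) := by
  obtain ⟨k, hk⟩ := h.okSet_lb x
  exact ⟨-(k : ℝ), hk⟩

theorem GoodCone.pfn_le (h : GoodCone P u) {x : G} {m : ℤ} {n : ℕ} (hn : 0 < n)
    (hmem : m • u - (n : ℤ) • x ∈ P) : pfn P u x ≤ (m : ℝ) / (n : ℝ) :=
  csInf_le (h.okSet_bddBelow x) ⟨m, n, hn, rfl, hmem⟩

theorem GoodCone.le_pfn (h : GoodCone P u) {x : G} {b : ℝ}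
    (hb : ∀ q ∈ okSet P u x, b ≤ q) : b ≤ pfn P u x :=
  le_csInf (h.okSet_nonempty x) hb

theorem GoodCone.pfn_nonpos (h : GoodCone P u) {x : G} (hx : -x ∈ P) : pfn P u x ≤ 0 := by
  have := h.pfn_le (x := x) (m := 0) (n := 1) one_pos (by simpa using hx)
  simpa using this

theorem GoodCone.pfn_zero_nonpos (h : GoodCone P u) : pfn P u 0 ≤ 0 :=
  h.pfn_nonpos (by simpa using h.zero_mem)

theorem GoodCone.pfn_add (h : GoodCone P u) (x y : G) :
    pfn P u (x + y) ≤ pfn P u x + pfn P u y := by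
  have key : ∀ q ∈ okSet P u x, ∀ r ∈ okSet P u y, pfn P u (x + y) ≤ q + r := by
    rintro q ⟨m, n, hn, rfl, hmem⟩ r ⟨m', n', hn', rfl, hmem'⟩
    have hmem2 : (m * n' + m' * n) • u - ((n * n' : ℕ) : ℤ) • (x + y) ∈ P := by
      have h1 : (n' : ℤ) • (m • u - (n : ℤ) • x) ∈ P := h.zsmul_mem (by positivity) hmem
      have h2 : (n : ℤ) • (m' • u - (n' : ℤ) • y) ∈ P := h.zsmul_mem (by positivity) hmem'
      have := h.add_mem _ h1 _ h2
      convert this using 1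
      push_cast
      module
    have := h.pfn_le (by positivity : 0 < n * n') hmem2
    refine this.trans (le_of_eq ?_)
    have hn0 : (n : ℝ) ≠ 0 := by exact_mod_cast hn.ne'
    have hn'0 : (n' : ℝ) ≠ 0 := by exact_mod_cast hn'.ne'
    push_cast
    field_simp
    try ring
  have step1 : ∀ r ∈ okSet P u y, pfn P u (x + y) - r ≤ pfn P u x := by
    intro r hr
    refine h.le_pfn fun q hq => ?_
    have := key q hq r hr
    linarith
  refine sub_le_iff_le_add'.mp ?_
  rw [sub_le_iff_le_add']
  have : pfn P u (x + y) - pfn P u x ≤ pfn P u y := by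
    refine h.le_pfn fun r hr => ?_
    have := step1 r hr
    linarith
  linarith

theorem GoodCone.pfn_nsmul_le (h : GoodCone P u) (n : ℕ) (x : G) :
    pfn P u ((n : ℤ) • x) ≤ (n : ℝ) * pfn P u x := by
  rcases Nat.eq_zero_or_pos n with rfl | hn
  · simpa using h.pfn_zero_nonpos
  · have key : ∀ q ∈ okSet P u x, pfn P u ((n : ℤ) • x) / (n : ℝ) ≤ q := by
      rintro q ⟨m, k, hk, rfl, hmem⟩
      have hmem2 : ((n : ℤ) * m) • u - (k : ℤ) • ((n : ℤ) • x) ∈ P := by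
        have := h.zsmul_mem (c := (n : ℤ)) (by positivity) hmem
        convert this using 1
        simp only [smul_sub, smul_smul]
        rw [mul_comm (k : ℤ) (n : ℤ)]
      have hple := h.pfn_le hk hmem2
      rw [le_div_iff₀ (by exact_mod_cast hk : (0:ℝ) < (k:ℝ))] at hple
      rw [div_le_div_iff₀ (by exact_mod_cast hn : (0:ℝ) < (n:ℝ))
        (by exact_mod_cast hk : (0:ℝ) < (k:ℝ))]
      push_cast at hple ⊢
      linarith
    have hfin := h.le_pfn (b := pfn P u ((n : ℤ) • x) / (n : ℝ)) key
    rw [div_le_iff₀ (by exact_mod_cast hn : (0:ℝ) < (n:ℝ))] at hfin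
    linarith

theorem GoodCone.le_pfn_zsmul_unit (h : GoodCone P u) (c : ℤ) :
    (c : ℝ) ≤ pfn P u (c • u) := by
  refine h.le_pfn ?_
  rintro q ⟨m, n, hn, rfl, hmem⟩
  have hmem2 : (m - n * c) • u ∈ P := by
    convert hmem using 1
    rw [sub_smul, smul_smul]
  have h3 : (0 : ℤ) ≤ m - n * c := h.unit_nonneg hmem2
  rw [le_div_iff₀ (by exact_mod_cast hn)]
  have : (c : ℝ) * n = ((n * c : ℤ) : ℝ) := by push_cast; ring
  rw [this]
  exact_mod_cast (by omega : (n * c : ℤ) ≤ m)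

/-- The key inequality a candidate value `y` for extending `f` to `x` must satisfy. -/
def Kp (P : Set G) (u : G) (f : G →ₗ.[ℤ] ℝ) (x : G) (y : ℝ) : Prop :=
  ∀ (z : f.domain) (c : ℤ), f z + (c : ℝ) * y ≤ pfn P u (↑z + c • x)

theorem GoodCone.exists_y (h : GoodCone P u) (f : G →ₗ.[ℤ] ℝ)
    (hf : ∀ z : f.domain, f z ≤ pfn P u ↑z) (x : G) : ∃ y, Kp P u f x y := by
  classical
  set A : Set ℝ :=
    {r | ∃ (z : f.domain) (m : ℕ), 0 < m ∧ r = (f z - pfn P u (↑z - (m : ℤ) • x)) / (m : ℝ)}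
    with hA_def
  set B : Set ℝ :=
    {r | ∃ (z : f.domain) (n : ℕ), 0 < n ∧ r = (pfn P u (↑z + (n : ℤ) • x) - f z) / (n : ℝ)}
    with hB_def
  have key : ∀ a ∈ A, ∀ b ∈ B, a ≤ b := by
    rintro a ⟨z, m, hm, rfl⟩ b ⟨z', n, hn, rfl⟩
    have main : (n : ℝ) * f z + (m : ℝ) * f z' ≤
        (n : ℝ) * pfn P u (↑z - (m : ℤ) • x) + (m : ℝ) * pfn P u (↑z' + (n : ℤ) • x) := by
      have e1 : (n : ℝ) * f z + (m : ℝ) * f z' = f ((n : ℤ) • z + (m : ℤ) • z') := by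
        rw [f.map_add, f.map_smul, f.map_smul]
        push_cast [zsmul_eq_mul]
        ring
      have e2 : ((((n : ℤ) • z + (m : ℤ) • z' : f.domain)) : G) =
          (n : ℤ) • (↑z - (m : ℤ) • x) + (m : ℤ) • (↑z' + (n : ℤ) • x) := by
        push_cast
        module
      calc (n : ℝ) * f z + (m : ℝ) * f z' = f ((n : ℤ) • z + (m : ℤ) • z') := e1
        _ ≤ pfn P u ↑((n : ℤ) • z + (m : ℤ) • z') := hf _
        _ = pfn P u ((n : ℤ) • (↑z - (m : ℤ) • x) + (m : ℤ) • (↑z' + (n : ℤ) • x)) := by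
            rw [e2]
        _ ≤ pfn P u ((n : ℤ) • (↑z - (m : ℤ) • x)) +
            pfn P u ((m : ℤ) • (↑z' + (n : ℤ) • x)) := h.pfn_add _ _
        _ ≤ (n : ℝ) * pfn P u (↑z - (m : ℤ) • x) + (m : ℝ) * pfn P u (↑z' + (n : ℤ) • x) :=
            add_le_add (h.pfn_nsmul_le n _) (h.pfn_nsmul_le m _)
    rw [div_le_div_iff₀ (by exact_mod_cast hm : (0:ℝ) < (m:ℝ))
      (by exact_mod_cast hn : (0:ℝ) < (n:ℝ))]
    nlinarith [main]
  have hA : A.Nonempty := ⟨_, 0, 1, one_pos, rfl⟩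
  have hB : B.Nonempty := ⟨_, 0, 1, one_pos, rfl⟩
  obtain ⟨b0, hb0⟩ := hB
  have hAbdd : BddAbove A := ⟨b0, fun a ha => key a ha b0 hb0⟩
  refine ⟨sSup A, ?_⟩
  have hle1 : ∀ a ∈ A, a ≤ sSup A := fun a ha => le_csSup hAbdd ha
  have hle2 : ∀ b ∈ B, sSup A ≤ b := fun b hb => csSup_le hA fun a ha => key a ha b hb
  intro z c
  rcases lt_trichotomy c 0 with hc | rfl | hc
  · set m : ℕ := (-c).toNat with hm_def
    have hmc : (m : ℤ) = -c := Int.toNat_of_nonneg (by omega)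
    have hm : 0 < m := by omega
    have ha : (f z - pfn P u (↑z - (m : ℤ) • x)) / (m : ℝ) ∈ A := ⟨z, m, hm, rfl⟩
    have h1 := hle1 _ ha
    rw [div_le_iff₀ (by exact_mod_cast hm : (0:ℝ) < (m:ℝ))] at h1
    have e : (↑z : G) + c • x = ↑z - (m : ℤ) • x := by rw [hmc]; module
    rw [e]
    have : (c : ℝ) = -(m : ℝ) := by
      have e2 : ((m : ℤ) : ℝ) = ((-c : ℤ) : ℝ) := by rw [hmc]
      push_cast at e2
      linarith
    rw [this]
    nlinarith [h1]
  · simpa using hf z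
  · set n : ℕ := c.toNat with hn_def
    have hnc : (n : ℤ) = c := Int.toNat_of_nonneg (by omega)
    have hn : 0 < n := by omega
    have hb : (pfn P u (↑z + (n : ℤ) • x) - f z) / (n : ℝ) ∈ B := ⟨z, n, hn, rfl⟩
    have h1 := hle2 _ hb
    rw [le_div_iff₀ (by exact_mod_cast hn : (0:ℝ) < (n:ℝ))] at h1
    have e : (↑z : G) + c • x = ↑z + (n : ℤ) • x := by rw [hnc]
    rw [e]
    have : (c : ℝ) = (n : ℝ) := by exact_mod_cast congrArg (fun k : ℤ => (k : ℝ)) hnc.symm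
    rw [this]
    nlinarith [h1]

theorem GoodCone.step (h : GoodCone P u) (f : G →ₗ.[ℤ] ℝ)
    (hf : ∀ z : f.domain, f z ≤ pfn P u ↑z) (x : G) (hx : x ∉ f.domain) :
    ∃ g, f < g ∧ ∀ z : g.domain, g z ≤ pfn P u ↑z := by
  obtain ⟨y, hy⟩ := h.exists_y f hf x
  have hp0 : pfn P u 0 ≤ 0 := h.pfn_zero_nonpos
  have hyz : ∀ (z : f.domain) (c : ℤ), (↑z : G) + c • x = 0 → f z + (c : ℝ) * y ≤ 0 := by
    intro z c hzc
    have := hy z c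
    rw [hzc] at this
    linarith
  have H : ∀ c : ℤ, c • x = 0 → c • y = 0 := by
    intro c hc
    have h1 := hyz 0 c (by simpa using hc)
    have h2 := hyz 0 (-c) (by simp [neg_smul, hc])
    rw [f.map_zero, zero_add] at h1 h2
    push_cast at h1 h2
    rw [zsmul_eq_mul]
    push_cast
    linarith
  set g1 := LinearPMap.mkSpanSingleton' (σ := RingHom.id ℤ) x y H with hg1_def
  have compat : ∀ (a : f.domain) (b : g1.domain), (↑a : G) = ↑b → f a = g1 b := by
    rintro a ⟨b, hb⟩ hab
    obtain ⟨c, rfl⟩ := Submodule.mem_span_singleton.1 hb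
    rw [LinearPMap.mkSpanSingleton'_apply, RingHom.id_apply]
    have h1 := hyz a (-c) (by push_cast; rw [hab]; module)
    have h2 := hyz (-a) c (by push_cast; rw [show ((a : G)) = c • x from hab]; module)
    rw [f.map_neg] at h2
    push_cast at h1 h2
    rw [zsmul_eq_mul]
    push_cast
    linarith
  refine ⟨f.sup g1 compat, lt_of_le_of_ne (f.left_le_sup g1 compat) fun heq => hx ?_, ?_⟩
  · rw [heq, LinearPMap.domain_sup]
    exact Submodule.mem_sup_right (Submodule.mem_span_singleton_self x)
  · rintro ⟨z, hz⟩
    have hz' : z ∈ f.domain ⊔ g1.domain := hz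
    rcases Submodule.mem_sup.1 hz' with ⟨a, ha, b, hb, rfl⟩
    obtain ⟨c, rfl⟩ := Submodule.mem_span_singleton.1 hb
    erw [LinearPMap.sup_apply compat ⟨a, ha⟩ ⟨c • x, hb⟩ ⟨a + c • x, hz⟩ rfl,
      LinearPMap.mkSpanSingleton'_apply]
    have := hy ⟨a, ha⟩ c
    simpa [zsmul_eq_mul] using this

theorem GoodCone.exists_state (h : GoodCone P u) :
    ∃ s : G →+ ℝ, (∀ x ∈ P, 0 ≤ s x) ∧ s u = 1 := by
  classical
  set S : Set (G →ₗ.[ℤ] ℝ) := {f | ∀ z : f.domain, f z ≤ pfn P u ↑z} with hS_def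
  have H0 : ∀ c : ℤ, c • u = 0 → c • (1 : ℝ) = 0 := by
    intro c hc
    have h1 : c • u ∈ P := hc ▸ h.zero_mem
    have h2 : (-c) • u ∈ P := by rw [neg_smul, hc, neg_zero]; exact h.zero_mem
    have e1 := h.unit_nonneg h1
    have e2 := h.unit_nonneg h2
    have : c = 0 := by omega
    simp [this]
  set f0 := LinearPMap.mkSpanSingleton' (σ := RingHom.id ℤ) u (1 : ℝ) H0 with hf0_def
  have hf0 : f0 ∈ S := by
    rintro ⟨z, hz⟩
    obtain ⟨c, rfl⟩ := Submodule.mem_span_singleton.1 hz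
    rw [LinearPMap.mkSpanSingleton'_apply]
    have := h.le_pfn_zsmul_unit c
    simpa [zsmul_eq_mul] using this
  have hSc : ∀ c ⊆ S, IsChain (· ≤ ·) c → ∀ y ∈ c, ∃ ub ∈ S, ∀ z ∈ c, z ≤ ub := by
    intro c hcs c_chain y hy
    have cne : c.Nonempty := ⟨y, hy⟩
    have hcd : DirectedOn (· ≤ ·) c := c_chain.directedOn
    refine ⟨LinearPMap.sSup c hcd, ?_, fun _ => LinearPMap.le_sSup hcd⟩
    rintro ⟨x, hx⟩
    have hdir : DirectedOn (· ≤ ·) (LinearPMap.domain '' c) :=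
      directedOn_image.2 (hcd.mono LinearPMap.domain_mono.monotone)
    rcases (Submodule.mem_sSup_of_directed (cne.image _) hdir).1 hx with ⟨_, ⟨f, hfc, rfl⟩, hfx⟩
    have hle : f ≤ LinearPMap.sSup c hcd := LinearPMap.le_sSup _ hfc
    have heq : f ⟨x, hfx⟩ = LinearPMap.sSup c hcd ⟨x, hx⟩ := hle.2 rfl
    rw [← heq]
    exact hcs hfc ⟨x, hfx⟩
  obtain ⟨q, hq0, hqS, hqmax⟩ := zorn_le_nonempty₀ S hSc f0 hf0
  have htop : q.domain = ⊤ := by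
    by_contra hne
    obtain ⟨x, -, hx⟩ : ∃ x ∈ (⊤ : Submodule ℤ G), x ∉ q.domain :=
      SetLike.exists_of_lt (lt_top_iff_ne_top.2 hne)
    obtain ⟨g, hqg, hgS⟩ := h.step q hqS x hx
    exact hqg.ne' ((hqmax hgS hqg.le).antisymm hqg.le)
  have hmem : ∀ x : G, x ∈ q.domain := fun x => htop ▸ Submodule.mem_top
  refine ⟨AddMonoidHom.mk' (fun x => q ⟨x, hmem x⟩) ?_, ?_, ?_⟩
  · intro a b
    show q ⟨a + b, hmem (a + b)⟩ = q ⟨a, hmem a⟩ + q ⟨b, hmem b⟩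
    rw [show (⟨a + b, hmem (a + b)⟩ : q.domain) = ⟨a, hmem a⟩ + ⟨b, hmem b⟩ from rfl, q.map_add]
  · intro x hxP
    have h1 : q ⟨-x, hmem (-x)⟩ ≤ pfn P u (-x) := hqS ⟨-x, hmem (-x)⟩
    have h2 : pfn P u (-x) ≤ 0 := h.pfn_nonpos (by simpa using hxP)
    have h3 : (⟨-x, hmem (-x)⟩ : q.domain) = -⟨x, hmem x⟩ := rfl
    rw [h3, q.map_neg] at h1
    simp only [AddMonoidHom.mk'_apply]
    linarith
  · have huf0 : u ∈ f0.domain := Submodule.mem_span_singleton_self u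
    have heq : f0 ⟨u, huf0⟩ = q ⟨u, hmem u⟩ := hq0.2 rfl
    have : f0 ⟨u, huf0⟩ = 1 := LinearPMap.mkSpanSingleton'_apply_self u 1 H0 _
    simp only [AddMonoidHom.mk'_apply]
    rw [← heq, this]

end StmtFive




/-- A state on a partially ordered abelian group with positive cone `P` and order unit
`u` is a positive additive homomorphism into `ℝ` normalized at `u`. -/
def IsState {G : Type*} [AddCommGroup G] (P : Set G) (u : G) (s : G →+ ℝ) : Prop :=
  (∀ x ∈ P, 0 ≤ s x) ∧ s u = 1

/-- The tensor product `s₁ ⊗ s₂ : G ⊗ H → ℝ` of two real-valued additive maps. -/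
noncomputable def tensorState {G H : Type*} [AddCommGroup G] [AddCommGroup H]
    (s : G →+ ℝ) (t : H →+ ℝ) : TensorProduct ℤ G H →+ ℝ :=
  ((LinearMap.mul' ℤ ℝ).comp
    (TensorProduct.map s.toIntLinearMap t.toIntLinearMap)).toAddMonoidHom

/-- The positive cone on `G ⊗ H`: `{0}` together with the elements on which every
tensor product of states is strictly positive. -/
def tensorCone {G H : Type*} [AddCommGroup G] [AddCommGroup H]
    (P : Set G) (u : G) (Q : Set H) (v : H) : Set (TensorProduct ℤ G H) :=
  {0} ∪ {x | ∀ s t, IsState P u s → IsState Q v t → 0 < tensorState s t x}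

namespace StmtFive

theorem tensorState_tmul {G H : Type*} [AddCommGroup G] [AddCommGroup H]
    (s : G →+ ℝ) (t : H →+ ℝ) (g : G) (h : H) :
    tensorState s t (g ⊗ₜ[ℤ] h) = s g * t h := by
  simp [tensorState]

theorem state_abs_le {G : Type*} [AddCommGroup G] {P : Set G} {u : G}
    (hu : ∀ g : G, ∃ n : ℕ, n • u - g ∈ P) (g : G) :
    ∃ C : ℝ, 0 ≤ C ∧ ∀ s : G →+ ℝ, IsState P u s → |s g| ≤ C := by
  obtain ⟨n1, h1⟩ := hu g
  obtain ⟨n2, h2⟩ := hu (-g)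
  refine ⟨max n1 n2, by positivity, fun s hs => ?_⟩
  have b1 : 0 ≤ s (n1 • u - g) := hs.1 _ h1
  have b2 : 0 ≤ s (n2 • u - -g) := hs.1 _ h2
  rw [map_sub, map_nsmul, hs.2, nsmul_eq_mul, mul_one] at b1
  rw [map_sub, map_nsmul, hs.2, nsmul_eq_mul, mul_one, map_neg, sub_neg_eq_add] at b2
  rw [abs_le]
  constructor
  · have : -(max (n1:ℝ) n2) ≤ -(n2:ℝ) := by
      simp only [neg_le_neg_iff]
      exact le_max_right _ _
    linarith
  · have : (n1 : ℝ) ≤ max (n1:ℝ) n2 := le_max_left _ _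
    linarith

theorem exists_tensor_bound {G H : Type*} [AddCommGroup G] [AddCommGroup H]
    {P : Set G} {u : G} {Q : Set H} {v : H}
    (hu : ∀ g : G, ∃ n : ℕ, n • u - g ∈ P) (hv : ∀ h : H, ∃ n : ℕ, n • v - h ∈ Q)
    (a : TensorProduct ℤ G H) :
    ∃ C : ℝ, 0 ≤ C ∧ ∀ (s : G →+ ℝ) (t : H →+ ℝ), IsState P u s → IsState Q v t →
      |tensorState s t a| ≤ C := by
  induction a using TensorProduct.induction_on with
  | zero => exact ⟨0, le_rfl, fun s t _ _ => by simp⟩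
  | tmul g h =>
    obtain ⟨C1, hC1, hb1⟩ := state_abs_le hu g
    obtain ⟨C2, hC2, hb2⟩ := state_abs_le hv h
    refine ⟨C1 * C2, by positivity, fun s t hs ht => ?_⟩
    rw [tensorState_tmul, abs_mul]
    exact mul_le_mul (hb1 s hs) (hb2 t ht) (abs_nonneg _) hC1
  | add x y ihx ihy =>
    obtain ⟨Cx, hCx, hbx⟩ := ihx
    obtain ⟨Cy, hCy, hby⟩ := ihy
    refine ⟨Cx + Cy, by positivity, fun s t hs ht => ?_⟩
    rw [map_add]
    exact (abs_add_le _ _).trans (add_le_add (hbx s t hs ht) (hby s t hs ht))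

theorem tensorState_nsmul_unit {G H : Type*} [AddCommGroup G] [AddCommGroup H]
    {P : Set G} {u : G} {Q : Set H} {v : H} {s : G →+ ℝ} {t : H →+ ℝ}
    (hs : IsState P u s) (ht : IsState Q v t) (m : ℕ) :
    tensorState s t (m • (u ⊗ₜ[ℤ] v)) = (m : ℝ) := by
  rw [map_nsmul, tensorState_tmul, hs.2, ht.2, mul_one, nsmul_eq_mul, mul_one]

end StmtFive

/-- Let `G` and `H` be simple partially ordered abelian groups with order units `u`, `v`.
Then `(G ⊗ H, (G ⊗ H)₊, u ⊗ v)` is a partially ordered abelian group with order unit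
`u ⊗ v`: `G ⊗ H = (G⊗H)₊ − (G⊗H)₊`; `(G⊗H)₊ ∩ (−(G⊗H)₊) = {0}`; and for every
`a ∈ G ⊗ H` there is `m : ℕ` with `m (u⊗v) − a ∈ (G⊗H)₊`. -/
theorem stmt_5 {G H : Type*} [AddCommGroup G] [AddCommGroup H]
    (P : Set G) (u : G) (Q : Set H) (v : H)
    (hP0 : (0 : G) ∈ P) (hPadd : ∀ x ∈ P, ∀ y ∈ P, x + y ∈ P)
    (hPpointed : ∀ x ∈ P, -x ∈ P → x = 0)
    (huP : u ∈ P) (hu : ∀ g : G, ∃ n : ℕ, n • u - g ∈ P)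
    (hQ0 : (0 : H) ∈ Q) (hQadd : ∀ x ∈ Q, ∀ y ∈ Q, x + y ∈ Q)
    (hQpointed : ∀ x ∈ Q, -x ∈ Q → x = 0)
    (hvQ : v ∈ Q) (hv : ∀ h : H, ∃ n : ℕ, n • v - h ∈ Q)
    -- simplicity: every nonzero positive element is an order unit
    (hGsimple : ∀ p ∈ P, p ≠ 0 → ∀ g : G, ∃ n : ℕ, n • p - g ∈ P)
    (hHsimple : ∀ q ∈ Q, q ≠ 0 → ∀ h : H, ∃ n : ℕ, n • q - h ∈ Q) :
    -- (1) G ⊗ H = (G⊗H)₊ − (G⊗H)₊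
    (∀ a : TensorProduct ℤ G H, ∃ x ∈ tensorCone P u Q v, ∃ y ∈ tensorCone P u Q v,
        a = x - y) ∧
    -- (2) (G⊗H)₊ ∩ (−(G⊗H)₊) = {0}
    (∀ a : TensorProduct ℤ G H,
        a ∈ tensorCone P u Q v → -a ∈ tensorCone P u Q v → a = 0) ∧
    -- (3) u ⊗ v is an order unit
    (∀ a : TensorProduct ℤ G H, ∃ m : ℕ, m • (u ⊗ₜ[ℤ] v) - a ∈ tensorCone P u Q v) := by
  refine ⟨?_, ?_, ?_⟩
  · -- (1)
    intro a
    obtain ⟨C, hC0, hC⟩ := StmtFive.exists_tensor_bound hu hv a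
    set m : ℕ := ⌈C⌉₊ + 1 with hm_def
    have hmC : C < (m : ℝ) := by
      calc C ≤ (⌈C⌉₊ : ℝ) := Nat.le_ceil C
        _ < (m : ℝ) := by exact_mod_cast Nat.lt_succ_self _
    refine ⟨a + m • (u ⊗ₜ[ℤ] v), Or.inr ?_, m • (u ⊗ₜ[ℤ] v), Or.inr ?_, ?_⟩
    · intro s t hs ht
      rw [map_add, StmtFive.tensorState_nsmul_unit hs ht]
      have := abs_le.1 (hC s t hs ht)
      linarith [this.1]
    · intro s t hs ht
      rw [StmtFive.tensorState_nsmul_unit hs ht]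
      have : (0 : ℝ) < (m : ℝ) := by positivity
      linarith [hmC, hC0]
    · rw [add_sub_cancel_right]
  · -- (2)
    intro a ha hna
    rcases ha with ha0 | ha
    · exact ha0
    rcases hna with hna0 | hna
    · exact neg_eq_zero.1 hna0
    by_cases hG : u = 0
    · have hGtriv : ∀ g : G, g = 0 := by
        intro g
        obtain ⟨n, h1⟩ := hu g
        obtain ⟨n2, h2⟩ := hu (-g)
        rw [hG, smul_zero, zero_sub] at h1 h2
        exact hPpointed g (by simpa using h2) h1
      have htriv : ∀ b : TensorProduct ℤ G H, b = 0 := by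
        intro b
        induction b using TensorProduct.induction_on with
        | zero => rfl
        | tmul g h => rw [hGtriv g, TensorProduct.zero_tmul]
        | add x y ihx ihy => rw [ihx, ihy, add_zero]
      exact htriv a
    by_cases hH : v = 0
    · have hHtriv : ∀ g : H, g = 0 := by
        intro g
        obtain ⟨n, h1⟩ := hv g
        obtain ⟨n2, h2⟩ := hv (-g)
        rw [hH, smul_zero, zero_sub] at h1 h2
        exact hQpointed g (by simpa using h2) h1
      have htriv : ∀ b : TensorProduct ℤ G H, b = 0 := by
        intro b
        induction b using TensorProduct.induction_on with
        | zero => rfl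
        | tmul g h => rw [hHtriv h, TensorProduct.tmul_zero]
        | add x y ihx ihy => rw [ihx, ihy, add_zero]
      exact htriv a
    have hPg : StmtFive.GoodCone P u := ⟨hP0, hPadd, hPpointed, huP, hu, hG⟩
    have hQg : StmtFive.GoodCone Q v := ⟨hQ0, hQadd, hQpointed, hvQ, hv, hH⟩
    obtain ⟨s, hs1, hs2⟩ := hPg.exists_state
    obtain ⟨t, ht1, ht2⟩ := hQg.exists_state
    have p1 := ha s t ⟨hs1, hs2⟩ ⟨ht1, ht2⟩
    have p2 := hna s t ⟨hs1, hs2⟩ ⟨ht1, ht2⟩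
    rw [map_neg] at p2
    exfalso
    linarith
  · -- (3)
    intro a
    obtain ⟨C, hC0, hC⟩ := StmtFive.exists_tensor_bound hu hv a
    set m : ℕ := ⌈C⌉₊ + 1 with hm_def
    have hmC : C < (m : ℝ) := by
      calc C ≤ (⌈C⌉₊ : ℝ) := Nat.le_ceil C
        _ < (m : ℝ) := by exact_mod_cast Nat.lt_succ_self _
    refine ⟨m, Or.inr ?_⟩
    intro s t hs ht
    rw [map_sub, StmtFive.tensorState_nsmul_unit hs ht]
    have := abs_le.1 (hC s t hs ht)
    linarith [this.2]
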